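/- arXiv:0712.1576 — 10 statements merged into one kernel-verified Lean document; each statement's English description precedes it below -/
import Mathlib

section
/- Let S be a symmetric r×r rational matrix whose off-diagonal entries are nonnegative. If x', x'' ∈ ℚ^r are vectors with nonnegative entries satisfying S x' ≥ 0 and S x'' ≥ 0 componentwise, then the componentwise maximum x (with xᵢ = max(x'ᵢ, x''ᵢ)) also satisfies S x ≥ 0 componentwise. -/
open Matrix

theorem stmt1 (r : ℕ) (S : Matrix (Fin r) (Fin r) ℚ)
    (hsym : S.IsSymm) (hoff : ∀ i j : Fin r, i ≠ j → 0 ≤ S i j)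
    (x' x'' : Fin r → ℚ)
    (hx' : 0 ≤ x') (hx'' : 0 ≤ x'')
    (h' : 0 ≤ S.mulVec x') (h'' : 0 ≤ S.mulVec x'') :
    0 ≤ S.mulVec (fun i => max (x' i) (x'' i)) := by
  intro i
  rcases le_total (x'' i) (x' i) with h | h
  · refine le_trans (h' i) ?_
    simp only [mulVec, dotProduct]
    apply Finset.sum_le_sum
    intro j _
    by_cases hj : j = i
    · subst hj; simp [max_eq_left h]
    · exact mul_le_mul_of_nonneg_left (le_max_left _ _)
        (hoff i j (fun e => hj e.symm))
  · refine le_trans (h'' i) ?_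
    simp only [mulVec, dotProduct]
    apply Finset.sum_le_sum
    intro j _
    by_cases hj : j = i
    · subst hj; simp [max_eq_right h]
    · exact mul_le_mul_of_nonneg_left (le_max_right _ _)
        (hoff i j (fun e => hj e.symm))
end

section
/- Let S be a symmetric r×r real matrix with nonnegative off-diagonal entries and suppose the associated quadratic form is negative definite. If q ∈ ℝ^r has nonnegative entries and (S q)ⱼ ≥ 0 for every j, then q = 0. -/
open Matrix

theorem stmt2 (r : ℕ) (S : Matrix (Fin r) (Fin r) ℝ)
    (hsym : S.IsSymm) (hoff : ∀ i j : Fin r, i ≠ j → 0 ≤ S i j)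
    (hnd : ∀ x : Fin r → ℝ, x ≠ 0 → x ⬝ᵥ S.mulVec x < 0)
    (q : Fin r → ℝ) (hq : ∀ i, 0 ≤ q i) (hSq : ∀ j, 0 ≤ S.mulVec q j) :
    q = 0 := by
  by_contra h
  have hlt := hnd q h
  have hge : 0 ≤ q ⬝ᵥ S.mulVec q :=
    Finset.sum_nonneg fun i _ => mul_nonneg (hq i) (hSq i)
  linarith
end

section
/- Let S be a symmetric r×r real matrix with nonnegative off-diagonal entries. Write any x ∈ ℝ^r as x = x⁺ − x⁻ with x⁺ᵢ = max(xᵢ,0) and x⁻ᵢ = max(−xᵢ,0). If xᵀ S x > 0, then (x⁺)ᵀ S x⁺ > 0 or (x⁻)ᵀ S x⁻ > 0. -/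
open Matrix

theorem stmt5 (r : ℕ) (S : Matrix (Fin r) (Fin r) ℝ)
    (hsym : S.IsSymm) (hoff : ∀ i j : Fin r, i ≠ j → 0 ≤ S i j)
    (x : Fin r → ℝ) (hx : 0 < x ⬝ᵥ S.mulVec x) :
    0 < (fun i => max (x i) 0) ⬝ᵥ S.mulVec (fun i => max (x i) 0) ∨
    0 < (fun i => max (-x i) 0) ⬝ᵥ S.mulVec (fun i => max (-x i) 0) := by
  set p : Fin r → ℝ := fun i => max (x i) 0 with hp
  set n : Fin r → ℝ := fun i => max (-x i) 0 with hn
  have hpn0 : ∀ i, p i * n i = 0 := by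
    intro i
    simp only [hp, hn]
    rcases le_total (x i) 0 with h | h
    · rw [max_eq_right h]; ring
    · rw [max_eq_right (by linarith : -x i ≤ 0)]; ring
  have hpnn : ∀ (u v : Fin r → ℝ), (∀ i, 0 ≤ u i) → (∀ i, 0 ≤ v i) →
      (∀ i, u i * v i = 0) → 0 ≤ u ⬝ᵥ S.mulVec v := by
    intro u v hu hv huv
    unfold dotProduct Matrix.mulVec dotProduct
    apply Finset.sum_nonneg
    intro i _
    rw [Finset.mul_sum]
    apply Finset.sum_nonneg
    intro j _
    by_cases hij : i = j
    · subst hij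
      have h : u i * ((fun j => S i j) i * v i) = S i i * (u i * v i) := by ring
      rw [h, huv i, mul_zero]
    · have := hoff i j hij
      have := hu i; have := hv j
      positivity
  have hppos : ∀ i, 0 ≤ p i := fun i => le_max_right _ _
  have hnpos : ∀ i, 0 ≤ n i := fun i => le_max_right _ _
  have h1 : 0 ≤ p ⬝ᵥ S.mulVec n := hpnn p n hppos hnpos hpn0
  have h2 : 0 ≤ n ⬝ᵥ S.mulVec p := hpnn n p hnpos hppos
    (fun i => by rw [mul_comm]; exact hpn0 i)
  have hxpn : x = p - n := by
    funext i
    simp only [hp, hn, Pi.sub_apply]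
    rcases le_total (x i) 0 with h | h
    · rw [max_eq_right h, max_eq_left (by linarith : 0 ≤ -x i)]; ring
    · rw [max_eq_left h, max_eq_right (by linarith : -x i ≤ 0)]; ring
  rw [hxpn, Matrix.mulVec_sub, sub_dotProduct, dotProduct_sub, dotProduct_sub] at hx
  by_contra hc
  push_neg at hc
  obtain ⟨hc1, hc2⟩ := hc
  linarith
end

section
/- Let S be a symmetric r×r real matrix with nonnegative off-diagonal entries, negative semidefinite but not negative definite. Then there exists a nonzero vector e ∈ ℝ^r with nonnegative entries such that S e = 0 (in particular (S e)ⱼ ≥ 0 for all j). -/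
open Matrix

theorem stmt6 (r : ℕ) (S : Matrix (Fin r) (Fin r) ℝ)
    (hsym : S.IsSymm) (hoff : ∀ i j : Fin r, i ≠ j → 0 ≤ S i j)
    (hnsd : ∀ x : Fin r → ℝ, x ⬝ᵥ S.mulVec x ≤ 0)
    (hnnd : ∃ y : Fin r → ℝ, y ≠ 0 ∧ y ⬝ᵥ S.mulVec y = 0) :
    ∃ e : Fin r → ℝ, e ≠ 0 ∧ (∀ i, 0 ≤ e i) ∧ S.mulVec e = 0 := by
  obtain ⟨y, hy0, hyq⟩ := hnnd
  set e : Fin r → ℝ := fun i => |y i| with he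
  have hbform : ∀ a b : Fin r → ℝ, a ⬝ᵥ S.mulVec b = ∑ i, ∑ j, a i * S i j * b j := by
    intro a b
    simp [dotProduct, mulVec, Finset.mul_sum, mul_assoc]
  have hsymB : ∀ a b : Fin r → ℝ, a ⬝ᵥ S.mulVec b = b ⬝ᵥ S.mulVec a := by
    intro a b
    rw [hbform a b, hbform b a, Finset.sum_comm]
    refine Finset.sum_congr rfl fun i _ => Finset.sum_congr rfl fun j _ => ?_
    rw [show S j i = S i j from hsym.apply i j]; ring
  have hle : y ⬝ᵥ S.mulVec y ≤ e ⬝ᵥ S.mulVec e := by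
    rw [hbform, hbform]
    refine Finset.sum_le_sum fun i _ => Finset.sum_le_sum fun j _ => ?_
    rcases eq_or_ne i j with rfl | hij
    · have h1 : |y i| * |y i| = y i * y i := abs_mul_abs_self _
      simp only [he]
      exact le_of_eq (by linear_combination (-(S i i)) * h1)
    · have h1 : y i * y j ≤ |y i| * |y j| := by
        calc y i * y j ≤ |y i * y j| := le_abs_self _
        _ = |y i| * |y j| := abs_mul _ _
      have h2 := hoff i j hij
      simp only [he]
      nlinarith [h1, h2]
  have hqe : e ⬝ᵥ S.mulVec e = 0 := le_antisymm (hnsd e) (hyq ▸ hle)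
  have hj : ∀ j, S.mulVec e j = 0 := by
    intro j
    set u : Fin r → ℝ := Pi.single j 1 with hu
    set c := S.mulVec e j with hc
    have hud : u ⬝ᵥ S.mulVec e = c := by
      simp [hu, hc, Pi.single_apply, dotProduct]
    have hdu : e ⬝ᵥ S.mulVec u = c := by rw [hsymB]; exact hud
    set a := u ⬝ᵥ S.mulVec u with ha
    have ha0 : a ≤ 0 := hnsd u
    have hkey : ∀ t : ℝ, 2 * t * c + t ^ 2 * a ≤ 0 := by
      intro t
      have h := hnsd (e + t • u)
      rw [mulVec_add, mulVec_smul, dotProduct_add, add_dotProduct, add_dotProduct,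
        smul_dotProduct, dotProduct_smul, dotProduct_smul, smul_dotProduct] at h
      rw [hqe, hud, hdu] at h
      simp only [smul_eq_mul] at h
      nlinarith [h]
    by_contra hcne
    have hd : (0:ℝ) < 1 - a := by linarith
    have ht := hkey (c / (1 - a))
    have hcc : 0 < c * c := mul_self_pos.mpr hcne
    have hexp : (1 - a) ^ 2 * (2 * (c / (1 - a)) * c + (c / (1 - a)) ^ 2 * a)
        = c * c * (2 * (1 - a) + a) := by
      field_simp
    have h2 : c * c * (2 * (1 - a) + a) ≤ 0 := by
      rw [← hexp]
      exact mul_nonpos_of_nonneg_of_nonpos (by positivity) ht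
    nlinarith [h2, hcc, hd]
  refine ⟨e, ?_, fun i => abs_nonneg _, funext hj⟩
  intro h
  obtain ⟨i, hi⟩ := Function.ne_iff.mp hy0
  have := congrFun h i
  simp only [he, Pi.zero_apply] at this
  exact hi (abs_eq_zero.mp this)
end

section
/- Let S be a symmetric r×r rational matrix with nonnegative off-diagonal entries, and let a ∈ ℚ^r with aᵢ > 0. Then the set K = { x ∈ ℚ^r : 0 ≤ xᵢ ≤ aᵢ for all i, and (S x)ⱼ ≥ 0 for all j } has a greatest element with respect to the componentwise partial order ≤. -/
open Matrix

lemma rat_descent {ι : Type} [Fintype ι] {r : ℕ} (M : Matrix ι (Fin r) ℚ) (b : ι → ℚ)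
    (h : ∃ y : Fin r → ℝ, (M.map (Rat.cast (K := ℝ))).mulVec y = fun i => (b i : ℝ)) :
    ∃ x : Fin r → ℚ, M.mulVec x = b := by
  classical
  by_contra hc
  push_neg at hc
  have hb : b ∉ LinearMap.range M.mulVecLin := by
    rintro ⟨x, hx⟩
    exact hc x (by simpa [Matrix.mulVecLin] using hx)
  set W := LinearMap.range M.mulVecLin with hW
  have hπ : W.mkQ b ≠ 0 := by
    simpa [Submodule.Quotient.mk_eq_zero] using hb
  obtain ⟨φ, hφ⟩ : ∃ φ : Module.Dual ℚ ((ι → ℚ) ⧸ W), φ (W.mkQ b) ≠ 0 := by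
    by_contra hall
    push_neg at hall
    exact hπ ((Module.forall_dual_apply_eq_zero_iff ℚ _).mp hall)
  set ψ : Module.Dual ℚ (ι → ℚ) := φ.comp W.mkQ with hψ
  have hψW : ∀ v ∈ W, ψ v = 0 := by
    intro v hv
    simp [hψ, (Submodule.Quotient.mk_eq_zero W).mpr hv]
  set c : ι → ℚ := fun i => ψ (Pi.single i 1) with hcdef
  have hψeq : ∀ v : ι → ℚ, ψ v = c ⬝ᵥ v := by
    intro v
    have : v = ∑ i, v i • (Pi.single i 1 : ι → ℚ) := by
      funext j
      simp [Pi.single_apply, Finset.sum_ite_eq', mul_comm]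
    rw [this]
    rw [map_sum]
    simp [dotProduct, hcdef, _root_.map_smul, Pi.single_apply, Finset.sum_ite_eq', mul_comm]
  have hrow : c ᵥ* M = 0 := by
    funext j
    have h1 : ψ (M.mulVec (Pi.single j 1)) = 0 :=
      hψW _ ⟨Pi.single j 1, rfl⟩
    rw [hψeq] at h1
    rw [Matrix.dotProduct_mulVec] at h1
    simpa [dotProduct, Pi.single_apply, Finset.sum_ite_eq'] using h1
  have hcb : c ⬝ᵥ b ≠ 0 := by
    rw [← hψeq]
    exact hφ
  obtain ⟨y, hy⟩ := h
  have hzero : (fun i => (c i : ℝ)) ⬝ᵥ (M.map (Rat.cast (K := ℝ))).mulVec y = 0 := by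
    rw [Matrix.dotProduct_mulVec]
    have : (fun i => (c i : ℝ)) ᵥ* (M.map (Rat.cast (K := ℝ))) = 0 := by
      funext j
      have := congrFun hrow j
      simp only [Matrix.vecMul, dotProduct, Pi.zero_apply, Matrix.map_apply] at this ⊢
      exact_mod_cast congrArg (Rat.cast (K := ℝ)) this
    rw [this, zero_dotProduct]
  rw [hy] at hzero
  apply hcb
  have : ((c ⬝ᵥ b : ℚ) : ℝ) = 0 := by
    rw [← hzero]
    simp [dotProduct]
  exact_mod_cast this

lemma key_row {r : ℕ} (T : Matrix (Fin r) (Fin r) ℝ)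
    (hoff : ∀ i j : Fin r, i ≠ j → 0 ≤ T i j) (x z : Fin r → ℝ) (j : Fin r)
    (hxz : ∀ i, x i ≤ z i) (hj : z j = x j) (hx : 0 ≤ T.mulVec x j) :
    0 ≤ T.mulVec z j := by
  refine le_trans hx ?_
  simp only [Matrix.mulVec, dotProduct]
  apply Finset.sum_le_sum
  intro i _
  by_cases h : i = j
  · subst h; rw [hj]
  · exact mul_le_mul_of_nonneg_left (hxz i) (hoff j i (Ne.symm h))

lemma cast_mulVec {ι : Type} [Fintype ι] {r : ℕ} (M : Matrix ι (Fin r) ℚ) (x : Fin r → ℚ) :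
    (M.map (Rat.cast (K := ℝ))).mulVec (fun k => (x k : ℝ)) =
      fun p => ((M.mulVec x p : ℚ) : ℝ) := by
  funext p
  simp only [Matrix.mulVec, dotProduct, Matrix.map_apply]
  push_cast
  rfl

theorem stmt7 (r : ℕ) (S : Matrix (Fin r) (Fin r) ℚ)
    (hsym : S.IsSymm) (hoff : ∀ i j : Fin r, i ≠ j → 0 ≤ S i j)
    (a : Fin r → ℚ) (ha : ∀ i, 0 < a i) :
    ∃ m ∈ {x : Fin r → ℚ | (∀ i, 0 ≤ x i ∧ x i ≤ a i) ∧ ∀ j, 0 ≤ S.mulVec x j},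
      ∀ x ∈ {x : Fin r → ℚ | (∀ i, 0 ≤ x i ∧ x i ≤ a i) ∧ ∀ j, 0 ≤ S.mulVec x j},
        x ≤ m := by
  classical
  set Sℝ : Matrix (Fin r) (Fin r) ℝ := S.map (Rat.cast (K := ℝ)) with hSℝ
  have hoffℝ : ∀ i j : Fin r, i ≠ j → 0 ≤ Sℝ i j := by
    intro i j hij
    have := hoff i j hij
    simp only [hSℝ, Matrix.map_apply]
    exact_mod_cast this
  set Kr : Set (Fin r → ℝ) :=
    {x | (∀ i, 0 ≤ x i ∧ x i ≤ (a i : ℝ)) ∧ ∀ j, 0 ≤ Sℝ.mulVec x j} with hKr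
  -- join lemma
  have hjoin : ∀ x ∈ Kr, ∀ y ∈ Kr, x ⊔ y ∈ Kr := by
    intro x hx y hy
    refine ⟨fun i => ⟨le_sup_of_le_left (hx.1 i).1, sup_le (hx.1 i).2 (hy.1 i).2⟩, ?_⟩
    intro j
    rcases le_total (y j) (x j) with h | h
    · exact key_row Sℝ hoffℝ x (x ⊔ y) j (fun i => le_sup_left)
        (sup_eq_left.mpr h) (hx.2 j)
    · exact key_row Sℝ hoffℝ y (x ⊔ y) j (fun i => le_sup_right)
        (sup_eq_right.mpr h) (hy.2 j)
  -- Kr is compact and nonempty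
  have h0K : (0 : Fin r → ℝ) ∈ Kr := by
    constructor
    · intro i
      refine ⟨le_rfl, ?_⟩
      show (0:ℝ) ≤ (a i : ℝ)
      exact_mod_cast (ha i).le
    · intro j; simp [Matrix.mulVec_zero]
  have hmc : ∀ j, Continuous (fun x : Fin r → ℝ => Sℝ.mulVec x j) := by
    intro j
    have : (fun x : Fin r → ℝ => Sℝ.mulVec x j) = fun x => ∑ i, Sℝ j i * x i := by
      funext x; simp [Matrix.mulVec, dotProduct]
    rw [this]
    exact continuous_finset_sum _ fun i _ => continuous_const.mul (continuous_apply i)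
  have hclosed : IsClosed Kr := by
    have h1 : IsClosed {x : Fin r → ℝ | ∀ i, 0 ≤ x i ∧ x i ≤ (a i : ℝ)} := by
      rw [Set.setOf_forall]
      refine isClosed_iInter fun i => ?_
      have : {x : Fin r → ℝ | 0 ≤ x i ∧ x i ≤ (a i : ℝ)} =
          {x : Fin r → ℝ | 0 ≤ x i} ∩ {x : Fin r → ℝ | x i ≤ (a i : ℝ)} := rfl
      rw [this]
      exact (isClosed_le continuous_const (continuous_apply i)).inter
        (isClosed_le (continuous_apply i) continuous_const)
    have h2 : IsClosed {x : Fin r → ℝ | ∀ j, 0 ≤ Sℝ.mulVec x j} := by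
      rw [Set.setOf_forall]
      exact isClosed_iInter fun j => isClosed_le continuous_const (hmc j)
    exact h1.inter h2
  have hsub : Kr ⊆ Set.pi Set.univ (fun i => Set.Icc (0 : ℝ) (a i : ℝ)) := by
    intro x hx i _
    exact ⟨(hx.1 i).1, (hx.1 i).2⟩
  have hcomp : IsCompact Kr :=
    IsCompact.of_isClosed_subset (isCompact_univ_pi fun i => isCompact_Icc) hclosed hsub
  obtain ⟨m, hmK, hmax⟩ :=
    hcomp.exists_isMaxOn ⟨0, h0K⟩
      ((continuous_finset_sum Finset.univ fun i _ => continuous_apply i).continuousOn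
        (f := fun x : Fin r → ℝ => ∑ i, x i))
  have hgreatest : ∀ x ∈ Kr, ∀ i, x i ≤ m i := by
    intro x hx i
    have hz := hjoin x hx m hmK
    have hsum : ∑ k, (x k ⊔ m k) ≤ ∑ k, m k := by
      have := hmax hz
      simpa [Pi.sup_apply] using this
    have heq : ∀ k ∈ Finset.univ, (x k ⊔ m k) - m k = 0 := by
      refine (Finset.sum_eq_zero_iff_of_nonneg
        (fun k _ => sub_nonneg.mpr (le_sup_right : m k ≤ x k ⊔ m k))).mp ?_
      have hge : ∑ k, m k ≤ ∑ k, (x k ⊔ m k) :=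
        Finset.sum_le_sum fun k _ => le_sup_right
      rw [Finset.sum_sub_distrib]
      linarith
    have h1 := heq i (Finset.mem_univ i)
    have h2 : x i ≤ x i ⊔ m i := le_sup_left
    linarith
  -- uniqueness of the tight system
  have huniq : ∀ y : Fin r → ℝ,
      (∀ i, m i = (a i : ℝ) → y i = (a i : ℝ)) → (∀ i, m i = 0 → y i = 0) →
      (∀ j, Sℝ.mulVec m j = 0 → Sℝ.mulVec y j = 0) → y = m := by
    intro y hta htz htS
    set z : ℝ → (Fin r → ℝ) := fun t i => m i + t * (y i - m i) with hz
    have hzc : ∀ i, Continuous fun t => z t i := fun i => by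
      exact (continuous_const.add (continuous_id.mul continuous_const) :
        Continuous fun t : ℝ => m i + t * (y i - m i))
    have hev : ∀ᶠ t in nhds (0 : ℝ), z t ∈ Kr := by
      have h1 : ∀ᶠ t in nhds (0 : ℝ), ∀ i, 0 ≤ z t i := by
        rw [Filter.eventually_all]
        intro i
        by_cases hi : m i = 0
        · have : ∀ t, z t i = 0 := by intro t; simp [hz, hi, htz i hi]
          exact Filter.Eventually.of_forall fun t => le_of_eq (this t).symm
        · have hpos : 0 < m i := lt_of_le_of_ne (hmK.1 i).1 (Ne.symm hi)
          have h0 : (fun t => z t i) 0 = m i := by simp [hz]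
          have hca := (hzc i).continuousAt (x := (0:ℝ))
          have hev' : ∀ᶠ s in nhds ((fun t => z t i) 0), 0 < s := by
            rw [h0]; exact eventually_gt_nhds hpos
          exact (hca.eventually hev').mono fun t ht => le_of_lt ht
      have h2 : ∀ᶠ t in nhds (0 : ℝ), ∀ i, z t i ≤ (a i : ℝ) := by
        rw [Filter.eventually_all]
        intro i
        by_cases hi : m i = (a i : ℝ)
        · have : ∀ t, z t i = (a i : ℝ) := by intro t; simp [hz, hi, hta i hi]
          exact Filter.Eventually.of_forall fun t => le_of_eq (this t)
        · have hlt : m i < (a i : ℝ) := lt_of_le_of_ne (hmK.1 i).2 hi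
          have h0 : (fun t => z t i) 0 = m i := by simp [hz]
          have hca := (hzc i).continuousAt (x := (0:ℝ))
          have hev' : ∀ᶠ s in nhds ((fun t => z t i) 0), s < (a i : ℝ) := by
            rw [h0]; exact eventually_lt_nhds hlt
          exact (hca.eventually hev').mono fun t ht => le_of_lt ht
      have h3 : ∀ᶠ t in nhds (0 : ℝ), ∀ j, 0 ≤ Sℝ.mulVec (z t) j := by
        rw [Filter.eventually_all]
        intro j
        have hcalc : ∀ t, Sℝ.mulVec (z t) j =
            Sℝ.mulVec m j + t * (Sℝ.mulVec y j - Sℝ.mulVec m j) := by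
          intro t
          simp only [Matrix.mulVec, dotProduct, hz]
          have hterm : ∀ k : Fin r, Sℝ j k * (m k + t * (y k - m k)) =
              Sℝ j k * m k + t * (Sℝ j k * y k - Sℝ j k * m k) := fun k => by ring
          rw [Finset.sum_congr rfl (fun k _ => hterm k), Finset.sum_add_distrib,
            ← Finset.mul_sum, Finset.sum_sub_distrib]
        by_cases hj : Sℝ.mulVec m j = 0
        · have : ∀ t, Sℝ.mulVec (z t) j = 0 := by
            intro t; rw [hcalc t, hj, htS j hj]; ring
          exact Filter.Eventually.of_forall fun t => le_of_eq (this t).symm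
        · have hpos : 0 < Sℝ.mulVec m j := lt_of_le_of_ne (hmK.2 j) (Ne.symm hj)
          have hcont : Continuous fun t => Sℝ.mulVec (z t) j := by
            have heq2 : (fun t => Sℝ.mulVec (z t) j) =
                fun t => Sℝ.mulVec m j + t * (Sℝ.mulVec y j - Sℝ.mulVec m j) := by
              funext t; exact hcalc t
            rw [heq2]
            exact continuous_const.add (continuous_id.mul continuous_const)
          have h0 : (fun t => Sℝ.mulVec (z t) j) 0 = Sℝ.mulVec m j := by
            show Sℝ.mulVec (z 0) j = Sℝ.mulVec m j
            rw [hcalc 0]; ring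
          have hev' : ∀ᶠ s in nhds ((fun t => Sℝ.mulVec (z t) j) 0), 0 < s := by
            rw [h0]; exact eventually_gt_nhds hpos
          exact (hcont.continuousAt.eventually hev').mono fun t ht => le_of_lt ht
      filter_upwards [h1, h2, h3] with t ht1 ht2 ht3
      exact ⟨fun i => ⟨ht1 i, ht2 i⟩, ht3⟩
    obtain ⟨ε, hε, hball⟩ := Metric.eventually_nhds_iff.mp hev
    have hd1 : dist (ε / 2) (0:ℝ) < ε := by
      rw [Real.dist_eq, sub_zero, abs_of_pos (by linarith)]; linarith
    have hd2 : dist (-(ε / 2)) (0:ℝ) < ε := by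
      rw [Real.dist_eq, sub_zero, abs_of_neg (by linarith)]; linarith
    have hp : z (ε / 2) ∈ Kr := hball hd1
    have hn : z (-(ε / 2)) ∈ Kr := hball hd2
    funext i
    have h1 := hgreatest _ hp i
    have h2 := hgreatest _ hn i
    simp only [hz] at h1 h2
    nlinarith [h1, h2, hε]
  -- the rational tight linear system
  set M : Matrix ((Fin r) ⊕ ((Fin r) ⊕ (Fin r))) (Fin r) ℚ :=
    Matrix.of (Sum.elim (fun i => if m i = (a i : ℝ) then (Pi.single i 1 : Fin r → ℚ) else 0)
      (Sum.elim (fun i => if m i = 0 then (Pi.single i 1 : Fin r → ℚ) else 0)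
        (fun j => if Sℝ.mulVec m j = 0 then (fun k => S j k) else 0))) with hM
  set b : ((Fin r) ⊕ ((Fin r) ⊕ (Fin r))) → ℚ :=
    Sum.elim (fun i => if m i = (a i : ℝ) then a i else 0) (Sum.elim 0 0) with hb
  -- row descriptions
  have hrow1p : ∀ i, m i = (a i : ℝ) → ∀ k, M (Sum.inl i) k = (Pi.single i 1 : Fin r → ℚ) k := by
    intro i hi k
    show (if m i = (a i : ℝ) then (Pi.single i 1 : Fin r → ℚ) else 0) k = _
    rw [if_pos hi]
  have hrow1n : ∀ i, ¬ m i = (a i : ℝ) → ∀ k, M (Sum.inl i) k = 0 := by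
    intro i hi k
    show (if m i = (a i : ℝ) then (Pi.single i 1 : Fin r → ℚ) else 0) k = 0
    rw [if_neg hi]; rfl
  have hrow2p : ∀ i, m i = 0 → ∀ k, M (Sum.inr (Sum.inl i)) k = (Pi.single i 1 : Fin r → ℚ) k := by
    intro i hi k
    show (if m i = 0 then (Pi.single i 1 : Fin r → ℚ) else 0) k = _
    rw [if_pos hi]
  have hrow2n : ∀ i, ¬ m i = 0 → ∀ k, M (Sum.inr (Sum.inl i)) k = 0 := by
    intro i hi k
    show (if m i = 0 then (Pi.single i 1 : Fin r → ℚ) else 0) k = 0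
    rw [if_neg hi]; rfl
  have hrow3p : ∀ j, Sℝ.mulVec m j = 0 → ∀ k, M (Sum.inr (Sum.inr j)) k = S j k := by
    intro j hj k
    show (if Sℝ.mulVec m j = 0 then (fun k => S j k) else 0) k = S j k
    rw [if_pos hj]
  have hrow3n : ∀ j, ¬ Sℝ.mulVec m j = 0 → ∀ k, M (Sum.inr (Sum.inr j)) k = 0 := by
    intro j hj k
    show (if Sℝ.mulVec m j = 0 then (fun k => S j k) else 0) k = 0
    rw [if_neg hj]; rfl
  have hb1p : ∀ i, m i = (a i : ℝ) → b (Sum.inl i) = a i := by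
    intro i hi
    show (if m i = (a i : ℝ) then a i else 0) = a i
    rw [if_pos hi]
  have hb1n : ∀ i, ¬ m i = (a i : ℝ) → b (Sum.inl i) = 0 := by
    intro i hi
    show (if m i = (a i : ℝ) then a i else 0) = 0
    rw [if_neg hi]
  have hb2 : ∀ i, b (Sum.inr (Sum.inl i)) = 0 := fun i => rfl
  have hb3 : ∀ j, b (Sum.inr (Sum.inr j)) = 0 := fun j => rfl
  -- m is a real solution
  have hmsol : (M.map (Rat.cast (K := ℝ))).mulVec m = fun p => (b p : ℝ) := by
    funext p
    rcases p with i | i | j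
    · by_cases hi : m i = (a i : ℝ)
      · simp only [Matrix.mulVec, dotProduct, Matrix.map_apply, hrow1p i hi, hb1p i hi]
        simp [Pi.single_apply, apply_ite (Rat.cast (K := ℝ)), ite_mul, Finset.sum_ite_eq', ← hi]
      · simp only [Matrix.mulVec, dotProduct, Matrix.map_apply, hrow1n i hi, hb1n i hi]
        simp
    · by_cases hi : m i = 0
      · simp only [Matrix.mulVec, dotProduct, Matrix.map_apply, hrow2p i hi, hb2 i]
        simp [Pi.single_apply, apply_ite (Rat.cast (K := ℝ)), ite_mul, Finset.sum_ite_eq', hi]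
      · simp only [Matrix.mulVec, dotProduct, Matrix.map_apply, hrow2n i hi, hb2 i]
        simp
    · by_cases hj : Sℝ.mulVec m j = 0
      · simp only [Matrix.mulVec, dotProduct, Matrix.map_apply, hrow3p j hj, hb3 j]
        have := hj
        simp only [hSℝ, Matrix.mulVec, dotProduct, Matrix.map_apply] at this
        simpa using this
      · simp only [Matrix.mulVec, dotProduct, Matrix.map_apply, hrow3n j hj, hb3 j]
        simp
  obtain ⟨x, hx⟩ := rat_descent M b ⟨m, hmsol⟩
  -- rational consequences
  have e1 : ∀ i, m i = (a i : ℝ) → x i = a i := by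
    intro i hi
    have h := congrFun hx (Sum.inl i)
    simp only [Matrix.mulVec, dotProduct] at h
    simp only [hrow1p i hi] at h
    rw [hb1p i hi] at h
    simpa [Pi.single_apply, ite_mul, Finset.sum_ite_eq'] using h
  have e2 : ∀ i, m i = 0 → x i = 0 := by
    intro i hi
    have h := congrFun hx (Sum.inr (Sum.inl i))
    simp only [Matrix.mulVec, dotProduct] at h
    simp only [hrow2p i hi] at h
    rw [hb2 i] at h
    simpa [Pi.single_apply, ite_mul, Finset.sum_ite_eq'] using h
  have e3 : ∀ j, Sℝ.mulVec m j = 0 → S.mulVec x j = 0 := by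
    intro j hj
    have h := congrFun hx (Sum.inr (Sum.inr j))
    simp only [Matrix.mulVec, dotProduct] at h
    simp only [hrow3p j hj] at h
    rw [hb3 j] at h
    simpa [Matrix.mulVec, dotProduct] using h
  have hcastS : ∀ (v : Fin r → ℚ) (j : Fin r),
      Sℝ.mulVec (fun k => ((v k : ℝ))) j = ((S.mulVec v j : ℚ) : ℝ) := by
    intro v j
    simp only [hSℝ, Matrix.mulVec, dotProduct, Matrix.map_apply]
    push_cast
    rfl
  have hxm : (fun k => ((x k : ℝ))) = m := by
    apply huniq
    · intro i hi
      show ((x i : ℝ)) = (a i : ℝ)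
      exact_mod_cast congrArg (Rat.cast (K := ℝ)) (e1 i hi)
    · intro i hi
      show ((x i : ℝ)) = 0
      exact_mod_cast congrArg (Rat.cast (K := ℝ)) (e2 i hi)
    · intro j hj
      rw [hcastS x j, e3 j hj]
      exact Rat.cast_zero
  have hxi : ∀ i, ((x i : ℝ)) = m i := fun i => congrFun hxm i
  -- conclude
  refine ⟨x, ⟨fun i => ⟨?_, ?_⟩, fun j => ?_⟩, fun w hw => ?_⟩
  · have h := (hmK.1 i).1
    rw [← hxi i] at h
    exact_mod_cast h
  · have h := (hmK.1 i).2
    rw [← hxi i] at h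
    exact_mod_cast h
  · have h := hmK.2 j
    rw [← hxm, hcastS x j] at h
    exact_mod_cast h
  · have hwK : (fun k => ((w k : ℝ))) ∈ Kr := by
      refine ⟨fun i => ⟨?_, ?_⟩, fun j => ?_⟩
      · show (0:ℝ) ≤ (w i : ℝ)
        exact_mod_cast (hw.1 i).1
      · show (w i : ℝ) ≤ (a i : ℝ)
        exact_mod_cast (hw.1 i).2
      · rw [hcastS w j]
        exact_mod_cast hw.2 j
    intro i
    have h : ((w i : ℝ)) ≤ m i := hgreatest _ hwK i
    rw [← hxi i] at h
    exact_mod_cast h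
end

section
/- Let S be a symmetric r×r rational matrix with nonnegative off-diagonal entries and a ∈ ℚ^r with positive entries. Then the set K = { x ∈ [0,a] : S x ≥ 0 componentwise } is closed under componentwise maximum: if x', x'' ∈ K then their componentwise max lies in K. -/
open Matrix

lemma aux8 (r : ℕ) (S : Matrix (Fin r) (Fin r) ℚ)
    (hoff : ∀ i j : Fin r, i ≠ j → 0 ≤ S i j)
    (x y : Fin r → ℚ) (j : Fin r)
    (hle : ∀ i, x i ≤ y i) (hj : y j = x j)
    (hx : 0 ≤ S.mulVec x j) : 0 ≤ S.mulVec y j := by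
  refine le_trans hx ?_
  simp only [mulVec, dotProduct]
  apply Finset.sum_le_sum
  intro i _
  rcases eq_or_ne i j with h | h
  · subst h; rw [hj]
  · exact mul_le_mul_of_nonneg_left (hle i) (hoff j i (Ne.symm h))

theorem stmt8 (r : ℕ) (S : Matrix (Fin r) (Fin r) ℚ)
    (hsym : S.IsSymm) (hoff : ∀ i j : Fin r, i ≠ j → 0 ≤ S i j)
    (a : Fin r → ℚ)
    (x' x'' : Fin r → ℚ)
    (hx' : (∀ i, 0 ≤ x' i ∧ x' i ≤ a i) ∧ ∀ j, 0 ≤ S.mulVec x' j)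
    (hx'' : (∀ i, 0 ≤ x'' i ∧ x'' i ≤ a i) ∧ ∀ j, 0 ≤ S.mulVec x'' j) :
    (∀ i, 0 ≤ max (x' i) (x'' i) ∧ max (x' i) (x'' i) ≤ a i) ∧
      ∀ j, 0 ≤ S.mulVec (fun i => max (x' i) (x'' i)) j := by
  constructor
  · intro i
    exact ⟨le_max_of_le_left (hx'.1 i).1, max_le (hx'.1 i).2 (hx''.1 i).2⟩
  · intro j
    rcases max_cases (x' j) (x'' j) with ⟨h, _⟩ | ⟨h, _⟩
    · exact aux8 r S hoff x' _ j (fun i => le_max_left _ _) h (hx'.2 j)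
    · exact aux8 r S hoff x'' _ j (fun i => le_max_right _ _) h (hx''.2 j)
end

section
/- Let S be a symmetric r×r rational matrix with nonnegative off-diagonal entries, and a ∈ ℚ^r with positive entries. Suppose p ∈ ℚ^r is an element of K = { x ∈ [0,a] : S x ≥ 0 } that is maximal with respect to the componentwise order. Then for every index j with pⱼ < aⱼ one has (S p)ⱼ = 0. -/
open Matrix

theorem stmt9 (r : ℕ) (S : Matrix (Fin r) (Fin r) ℚ)
    (hsym : S.IsSymm) (hoff : ∀ i j : Fin r, i ≠ j → 0 ≤ S i j)
    (a : Fin r → ℚ) (ha : ∀ i, 0 < a i)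
    (p : Fin r → ℚ)
    (hp : (∀ i, 0 ≤ p i ∧ p i ≤ a i) ∧ ∀ j, 0 ≤ S.mulVec p j)
    (hmax : ∀ q : Fin r → ℚ,
      ((∀ i, 0 ≤ q i ∧ q i ≤ a i) ∧ ∀ j, 0 ≤ S.mulVec q j) → p ≤ q → q = p) :
    ∀ j, p j < a j → S.mulVec p j = 0 := by
  intro j hj
  by_contra hne
  have hpos : 0 < S.mulVec p j := lt_of_le_of_ne (hp.2 j) (Ne.symm hne)
  set c := max 1 (-S j j) with hc
  have hc1 : (1 : ℚ) ≤ c := le_max_left _ _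
  have hcS : -S j j ≤ c := le_max_right _ _
  have hc0 : (0 : ℚ) < c := lt_of_lt_of_le one_pos hc1
  set ε := min (a j - p j) (S.mulVec p j / c) with hε
  have hε0 : 0 < ε := lt_min (by linarith) (div_pos hpos hc0)
  have hε1 : ε ≤ a j - p j := min_le_left _ _
  have hε2 : ε * c ≤ S.mulVec p j := by
    have h := min_le_right (a j - p j) (S.mulVec p j / c)
    have : ε * c ≤ (S.mulVec p j / c) * c := by
      apply mul_le_mul_of_nonneg_right _ (le_of_lt hc0)
      exact h
    rwa [div_mul_cancel₀ _ (ne_of_gt hc0)] at this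
  set q : Fin r → ℚ := fun i => if i = j then p j + ε else p i with hq
  have hmul : ∀ i, S.mulVec q i = S.mulVec p i + S i j * ε := by
    intro i
    simp only [Matrix.mulVec, dotProduct, hq]
    have : ∀ k, S i k * (if k = j then p j + ε else p k)
        = S i k * p k + (if k = j then S i j * ε else 0) := by
      intro k
      by_cases hk : k = j <;> simp [hk] <;> ring
    rw [Finset.sum_congr rfl fun k _ => this k, Finset.sum_add_distrib,
      Finset.sum_ite_eq' Finset.univ j (fun _ => S i j * ε)]
    simp
  have hq1 : ∀ i, 0 ≤ q i ∧ q i ≤ a i := by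
    intro i
    by_cases hi : i = j
    · subst hi
      simp only [hq, if_pos rfl]
      constructor
      · have := (hp.1 i).1; linarith
      · linarith
    · simp only [hq, if_neg hi]
      exact hp.1 i
  have hq2 : ∀ i, 0 ≤ S.mulVec q i := by
    intro i
    rw [hmul i]
    by_cases hi : i = j
    · subst hi
      have := hp.2 i
      nlinarith
    · have h1 := hoff i j hi
      have h2 := hp.2 i
      nlinarith
  have hle : p ≤ q := by
    intro i
    by_cases hi : i = j
    · subst hi; simp only [hq, if_pos rfl]; linarith
    · simp [hq, if_neg hi]
  have := hmax q ⟨hq1, hq2⟩ hle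
  have hqj : q j = p j := congrFun this j
  simp only [hq, if_pos rfl] at hqj
  linarith
end

section
/- Uniqueness of the Zariski decomposition in matrix form: Let S be a symmetric r×r rational matrix with nonnegative off-diagonal entries and a ∈ ℚ^r with positive entries. Suppose (p, n) and (p', n') both satisfy: p + n = a, p, n ≥ 0, S p ≥ 0 componentwise, (S p)ⱼ = 0 for all j in the support of n, and the principal submatrix of S on the support of n is negative definite (or n = 0); similarly for (p', n'). Then p = p' and n = n'. -/
open Matrix

theorem zariski_key (r : ℕ) (S : Matrix (Fin r) (Fin r) ℚ)
    (hoff : ∀ i j : Fin r, i ≠ j → 0 ≤ S i j)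
    (p n p' n' : Fin r → ℚ)
    (hsum : p + n = p' + n')
    (hn : ∀ i, 0 ≤ n i) (hn' : ∀ i, 0 ≤ n' i)
    (hnef' : ∀ j, 0 ≤ S.mulVec p' j)
    (horth : ∀ j, 0 < n j → S.mulVec p j = 0)
    (hneg : ∀ x : Fin r → ℝ, (∀ j, ¬ 0 < n j → x j = 0) → x ≠ 0 →
      x ⬝ᵥ (S.map (Rat.cast : ℚ → ℝ)).mulVec x < 0) :
    ∀ j, n j ≤ n' j := by
  by_contra h
  push_neg at h
  obtain ⟨j0, hj0⟩ := h
  set y : Fin r → ℚ := fun j => max (n j - n' j) 0 with hy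
  set z : Fin r → ℚ := fun j => max (n' j - n j) 0 with hz
  have hy0 : ∀ j, 0 ≤ y j := fun j => le_max_right _ _
  have hz0 : ∀ j, 0 ≤ z j := fun j => le_max_right _ _
  have hyz : ∀ j, y j - z j = n j - n' j := by
    intro j
    rcases le_total (n j) (n' j) with h1 | h1
    · simp [hy, hz, max_eq_right (sub_nonpos.mpr h1), max_eq_left (sub_nonneg.mpr h1)]
    · simp [hy, hz, max_eq_left (sub_nonneg.mpr h1), max_eq_right (sub_nonpos.mpr h1)]
  have hpos : ∀ j, 0 < y j → 0 < n j := by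
    intro j hj
    by_contra hnj
    have h1 : n j - n' j ≤ 0 := by
      have := hn j
      have := hn' j
      push_neg at hnj
      linarith
    have : y j = 0 := max_eq_right h1
    rw [this] at hj; exact lt_irrefl 0 hj
  have hypos : ∀ j, 0 < y j → 0 < n j - n' j := by
    intro j hj
    by_contra h1
    push_neg at h1
    have : y j = 0 := max_eq_right h1
    rw [this] at hj; exact lt_irrefl 0 hj
  have hzpos : ∀ j, 0 < z j → 0 < n' j - n j := by
    intro j hj
    by_contra h1
    push_neg at h1
    have : z j = 0 := max_eq_right h1
    rw [this] at hj; exact lt_irrefl 0 hj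
  have hxp : (fun j => n j - n' j) = p' - p := by
    funext j
    have := congrFun hsum j
    simp only [Pi.add_apply] at this
    simp only [Pi.sub_apply]
    linarith
  have key1 : 0 ≤ y ⬝ᵥ S.mulVec (fun j => n j - n' j) := by
    rw [hxp, Matrix.mulVec_sub]
    apply Finset.sum_nonneg
    intro i _
    rcases eq_or_lt_of_le (hy0 i) with h1 | h1
    · simp [← h1]
    · have hni := hpos i h1
      have : (S.mulVec p' - S.mulVec p) i = S.mulVec p' i := by
        simp [Pi.sub_apply, horth i hni]
      rw [this]
      exact mul_nonneg (hy0 i) (hnef' i)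
  have key2 : 0 ≤ y ⬝ᵥ S.mulVec z := by
    simp only [dotProduct, Matrix.mulVec]
    apply Finset.sum_nonneg
    intro i _
    rw [Finset.mul_sum]
    apply Finset.sum_nonneg
    intro j _
    rcases eq_or_lt_of_le (hy0 i) with h1 | h1
    · simp [← h1]
    · rcases eq_or_lt_of_le (hz0 j) with h2 | h2
      · simp [← h2]
      · have hij : i ≠ j := by
          intro e
          subst e
          have := hypos i h1
          have := hzpos i h2
          linarith
        exact mul_nonneg h1.le (mul_nonneg (hoff i j hij) (hz0 j))
  have hQ : 0 ≤ y ⬝ᵥ S.mulVec y := by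
    have hdecomp : S.mulVec y = S.mulVec (fun j => n j - n' j) + S.mulVec z := by
      have hv : y = (fun j => n j - n' j) + z := by
        funext j
        have := hyz j
        show y j = (n j - n' j) + z j
        linarith
      rw [hv, Matrix.mulVec_add]
    rw [hdecomp, dotProduct_add]
    exact add_nonneg key1 key2
  have hxne : (fun j => (y j : ℝ)) ≠ 0 := by
    intro h0
    have h1 := congrFun h0 j0
    simp only [Pi.zero_apply, Rat.cast_eq_zero] at h1
    have : y j0 = n j0 - n' j0 := max_eq_left (by linarith)
    rw [h1] at this
    linarith
  have hsupp : ∀ j, ¬ 0 < n j → (fun j => (y j : ℝ)) j = 0 := by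
    intro j hj
    push_neg at hj
    have h1 : y j = 0 := max_eq_right (by have := hn' j; linarith)
    simp [h1]
  have hlt := hneg _ hsupp hxne
  have hcast : (fun j => (y j : ℝ)) ⬝ᵥ (S.map (Rat.cast : ℚ → ℝ)).mulVec (fun j => (y j : ℝ))
      = ((y ⬝ᵥ S.mulVec y : ℚ) : ℝ) := by
    simp only [dotProduct, Matrix.mulVec, Matrix.map_apply]
    push_cast
    ring
  rw [hcast] at hlt
  have : (0 : ℝ) ≤ ((y ⬝ᵥ S.mulVec y : ℚ) : ℝ) := by exact_mod_cast hQ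
  linarith

theorem stmt12 (r : ℕ) (S : Matrix (Fin r) (Fin r) ℚ)
    (hsym : S.IsSymm) (hoff : ∀ i j : Fin r, i ≠ j → 0 ≤ S i j)
    (a : Fin r → ℚ) (ha : ∀ i, 0 < a i)
    (p n p' n' : Fin r → ℚ)
    (hsum : p + n = a) (hsum' : p' + n' = a)
    (hp : ∀ i, 0 ≤ p i) (hn : ∀ i, 0 ≤ n i)
    (hp' : ∀ i, 0 ≤ p' i) (hn' : ∀ i, 0 ≤ n' i)
    (hnef : ∀ j, 0 ≤ S.mulVec p j) (hnef' : ∀ j, 0 ≤ S.mulVec p' j)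
    (horth : ∀ j, 0 < n j → S.mulVec p j = 0)
    (horth' : ∀ j, 0 < n' j → S.mulVec p' j = 0)
    (hneg : ∀ x : Fin r → ℝ, (∀ j, ¬ 0 < n j → x j = 0) → x ≠ 0 →
      x ⬝ᵥ (S.map (Rat.cast : ℚ → ℝ)).mulVec x < 0)
    (hneg' : ∀ x : Fin r → ℝ, (∀ j, ¬ 0 < n' j → x j = 0) → x ≠ 0 →
      x ⬝ᵥ (S.map (Rat.cast : ℚ → ℝ)).mulVec x < 0) :
    p = p' ∧ n = n' := by
  have hs : p + n = p' + n' := hsum.trans hsum'.symm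
  have h1 := zariski_key r S hoff p n p' n' hs hn hn' hnef' horth hneg
  have h2 := zariski_key r S hoff p' n' p n hs.symm hn' hn hnef horth' hneg'
  have hnn : n = n' := funext fun j => le_antisymm (h1 j) (h2 j)
  constructor
  · funext j
    have ha1 := congrFun hsum j
    have ha2 := congrFun hsum' j
    simp only [Pi.add_apply] at ha1 ha2
    have := congrFun hnn j
    linarith
  · exact hnn
end

section
/- Let S be a symmetric r×r rational matrix with nonnegative off-diagonal entries, a ∈ ℚ^r with aᵢ > 0, and suppose p + n = a with p, n ≥ 0, S p ≥ 0 componentwise, (S p)ⱼ = 0 for every j in the support of n, and S negative definite on the support of n. Then p is the greatest element of K = { x ∈ [0,a] : S x ≥ 0 } in the componentwise order. -/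
open Matrix

theorem stmt13 (r : ℕ) (S : Matrix (Fin r) (Fin r) ℚ)
    (hsym : S.IsSymm) (hoff : ∀ i j : Fin r, i ≠ j → 0 ≤ S i j)
    (a : Fin r → ℚ) (ha : ∀ i, 0 < a i)
    (p n : Fin r → ℚ)
    (hsum : p + n = a)
    (hp : ∀ i, 0 ≤ p i) (hn : ∀ i, 0 ≤ n i)
    (hnef : ∀ j, 0 ≤ S.mulVec p j)
    (horth : ∀ j, 0 < n j → S.mulVec p j = 0)
    (hneg : ∀ x : Fin r → ℝ, (∀ j, ¬ 0 < n j → x j = 0) → x ≠ 0 →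
      x ⬝ᵥ (S.map (Rat.cast : ℚ → ℝ)).mulVec x < 0) :
    ∀ q : Fin r → ℚ,
      ((∀ i, 0 ≤ q i ∧ q i ≤ a i) ∧ ∀ j, 0 ≤ S.mulVec q j) → q ≤ p := by
  rintro q ⟨hq1, hq2⟩
  set y : Fin r → ℚ := fun j => max (q j - p j) 0 with hy
  set z : Fin r → ℚ := fun j => max (p j - q j) 0 with hz
  have hy0 : ∀ j, 0 ≤ y j := fun j => le_max_right _ _
  have hz0 : ∀ j, 0 ≤ z j := fun j => le_max_right _ _
  have hyz : ∀ j, y j * z j = 0 := by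
    intro j
    rcases le_total (q j) (p j) with h | h
    · have : y j = 0 := max_eq_right (by linarith)
      simp [this]
    · have : z j = 0 := max_eq_right (by linarith)
      simp [this]
  have hsupp : ∀ j, ¬ 0 < n j → y j = 0 := by
    intro j hj
    have hnj : n j = 0 := le_antisymm (not_lt.mp hj) (hn j)
    have hpa : p j = a j := by
      have := congrFun hsum j; simp only [Pi.add_apply] at this; linarith
    have : q j ≤ p j := by rw [hpa]; exact (hq1 j).2
    exact max_eq_right (by linarith)
  -- key: the quadratic form of y is nonnegative
  have hkey : 0 ≤ y ⬝ᵥ S.mulVec y := by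
    have hdecomp : y = (q - p) + z := by
      funext j
      simp only [hy, hz, Pi.add_apply, Pi.sub_apply]
      rcases le_total (q j) (p j) with h | h
      · rw [max_eq_right (by linarith : q j - p j ≤ 0),
          max_eq_left (by linarith : 0 ≤ p j - q j)]
        ring
      · rw [max_eq_left (by linarith : 0 ≤ q j - p j),
          max_eq_right (by linarith : p j - q j ≤ 0)]
        ring
    have h1 : 0 ≤ y ⬝ᵥ S.mulVec q := by
      apply Finset.sum_nonneg
      intro j _
      exact mul_nonneg (hy0 j) (hq2 j)
    have h2 : y ⬝ᵥ S.mulVec p = 0 := by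
      apply Finset.sum_eq_zero
      intro j _
      by_cases hj : 0 < n j
      · rw [horth j hj, mul_zero]
      · rw [hsupp j hj, zero_mul]
    have h3 : 0 ≤ y ⬝ᵥ S.mulVec z := by
      apply Finset.sum_nonneg
      intro i _
      rw [mulVec, dotProduct, Finset.mul_sum]
      apply Finset.sum_nonneg
      intro j _
      rcases eq_or_ne i j with rfl | hij
      · have h0 : y i * (S i i * z i) = S i i * (y i * z i) := by ring
        rw [h0, hyz i, mul_zero]
      · exact mul_nonneg (hy0 i) (mul_nonneg (hoff i j hij) (hz0 j))
    have hlin : y ⬝ᵥ S.mulVec y = (y ⬝ᵥ S.mulVec q - y ⬝ᵥ S.mulVec p) + y ⬝ᵥ S.mulVec z := by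
      nth_rewrite 2 [hdecomp]
      rw [mulVec_add, mulVec_sub, dotProduct_add, dotProduct_sub]
    rw [hlin]
    linarith
  -- y must be 0
  have hy_zero : y = 0 := by
    by_contra hne
    have hx : (fun j => ((y j : ℚ) : ℝ)) ≠ 0 := by
      intro h
      apply hne
      funext j
      have := congrFun h j
      simpa using this
    have := hneg (fun j => ((y j : ℚ) : ℝ)) (fun j hj => by simp [hsupp j hj]) hx
    have hcast : (fun j => ((y j : ℚ) : ℝ)) ⬝ᵥ (S.map (Rat.cast : ℚ → ℝ)).mulVec
        (fun j => ((y j : ℚ) : ℝ)) = ((y ⬝ᵥ S.mulVec y : ℚ) : ℝ) := by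
      simp only [dotProduct, mulVec, Matrix.map_apply]
      push_cast
      rfl
    rw [hcast] at this
    have : (y ⬝ᵥ S.mulVec y : ℚ) < 0 := by exact_mod_cast this
    linarith
  intro j
  have := congrFun hy_zero j
  simp only [hy, Pi.zero_apply] at this
  have : q j - p j ≤ 0 := by
    by_contra h
    push_neg at h
    rw [max_eq_left (le_of_lt h)] at this
    linarith
  linarith
end

section
/- Let S be a symmetric r×r real matrix with nonnegative off-diagonal entries that is negative semidefinite, and let R ∈ ℝ^r be nonzero with S R = 0. Write R = R⁺ − R⁻ with disjoint supports. If neither R ≥ 0 nor −R ≥ 0 (i.e., both R⁺ and R⁻ are nonzero), then (R⁺)ᵀ S R⁺ = 0 and (R⁻)ᵀ S R⁻ = 0. -/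
open Matrix

theorem stmt15 (r : ℕ) (S : Matrix (Fin r) (Fin r) ℝ)
    (hsym : S.IsSymm) (hoff : ∀ i j : Fin r, i ≠ j → 0 ≤ S i j)
    (hnsd : ∀ x : Fin r → ℝ, x ⬝ᵥ S.mulVec x ≤ 0)
    (R : Fin r → ℝ) (hR : R ≠ 0) (hker : S.mulVec R = 0)
    (hpos : (fun i => max (R i) 0) ≠ 0) (hneg : (fun i => max (-R i) 0) ≠ 0) :
    (fun i => max (R i) 0) ⬝ᵥ S.mulVec (fun i => max (R i) 0) = 0 ∧
    (fun i => max (-R i) 0) ⬝ᵥ S.mulVec (fun i => max (-R i) 0) = 0 := by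
  set P : Fin r → ℝ := fun i => max (R i) 0 with hP
  set N : Fin r → ℝ := fun i => max (-R i) 0 with hN
  have hRPN : R = P - N := by
    funext i
    simp only [hP, hN, Pi.sub_apply]
    rcases le_total (R i) 0 with h | h
    · rw [max_eq_right h, max_eq_left (by linarith)]; ring
    · rw [max_eq_left h, max_eq_right (by linarith)]; ring
  have h0 : R ⬝ᵥ S.mulVec R = 0 := by rw [hker, dotProduct_zero]
  have hswap : N ⬝ᵥ S.mulVec P = P ⬝ᵥ S.mulVec N := by
    rw [dotProduct_mulVec, dotProduct_comm, ← mulVec_transpose, hsym.eq]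
  have hPnn : ∀ i, 0 ≤ P i := fun i => le_max_right _ _
  have hNnn : ∀ i, 0 ≤ N i := fun i => le_max_right _ _
  have hPN : 0 ≤ P ⬝ᵥ S.mulVec N := by
    unfold dotProduct mulVec
    simp only [dotProduct]
    apply Finset.sum_nonneg
    intro i _
    rw [Finset.mul_sum]
    apply Finset.sum_nonneg
    intro j _
    rcases eq_or_lt_of_le (hPnn i) with hi | hi
    · rw [← hi]; simp
    rcases eq_or_lt_of_le (hNnn j) with hj | hj
    · rw [← hj]; simp
    have hij : i ≠ j := by
      intro h
      subst h
      have h1 : 0 < R i := by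
        by_contra h'
        push_neg at h'
        simp only [hP, max_eq_right h'] at hi
        exact lt_irrefl _ hi
      have h2 : R i < 0 := by
        by_contra h'
        push_neg at h'
        simp only [hN, max_eq_right (by linarith : -R i ≤ 0)] at hj
        exact lt_irrefl _ hj
      linarith
    exact mul_nonneg hi.le (mul_nonneg (hoff i j hij) hj.le)
  have hexp : R ⬝ᵥ S.mulVec R =
      P ⬝ᵥ S.mulVec P - P ⬝ᵥ S.mulVec N - (N ⬝ᵥ S.mulVec P - N ⬝ᵥ S.mulVec N) := by
    rw [hRPN, mulVec_sub, sub_dotProduct, dotProduct_sub, dotProduct_sub]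
  have hPP := hnsd P
  have hNN := hnsd N
  rw [hexp, hswap] at h0
  constructor <;> linarith
end
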